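/- For all integers n > k ≥ 1, the constant c_{n,k} = |B₂ⁿ|^{(n−k)/n} / |B₂^{n−k}| satisfies e^{−k/2} < c_{n,k} < 1. -/

import Mathlib

open MeasureTheory Set Metric
open scoped ENNReal RealInnerProductSpace NNReal

noncomputable section

abbrev E (n : ℕ) := EuclideanSpace ℝ (Fin n)

/-- A star body: compact, origin in the interior, star-shaped with respect to the
origin, and with continuous Minkowski functional (gauge). -/
def IsStarBody {n : ℕ} (K : Set (E n)) : Prop :=
  IsCompact K ∧ 0 ∈ interior K ∧
    (∀ x ∈ K, ∀ t : ℝ, 0 ≤ t → t ≤ 1 → t • x ∈ K) ∧ Continuous (gauge K)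

/-- An origin-symmetric convex body. -/
def IsSymmetricConvexBody {n : ℕ} (K : Set (E n)) : Prop :=
  IsCompact K ∧ Convex ℝ K ∧ 0 ∈ interior K ∧ ∀ x ∈ K, -x ∈ K


/-- The constant c_{n,k} = |B_2^n|^{(n-k)/n} / |B_2^{n-k}|. -/
def cnk (n k : ℕ) : ℝ :=
  (volume (ball (0 : E n) 1)).toReal ^ (((n : ℝ) - k) / n) /
    (volume (ball (0 : E (n - k)) 1)).toReal

/-! ### Auxiliary lemmas about `log ∘ Gamma` -/

/-- `L x = log (Γ x)`. -/
noncomputable def L (x : ℝ) : ℝ := Real.log (Real.Gamma x)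

lemma L_nonneg {x : ℝ} (hx : 2 ≤ x) : 0 ≤ L x := by
  have h1 : (1:ℝ) ≤ Real.Gamma x := by
    have := Real.Gamma_strictMonoOn_Ici.monotoneOn (by norm_num : (2:ℝ) ∈ Ici 2)
      (mem_Ici.mpr hx) hx
    rwa [Real.Gamma_two] at this
  exact Real.log_nonneg h1

lemma L32_neg : L (3/2) < 0 :=
  Real.log_neg (Real.Gamma_pos_of_pos (by norm_num)) Real.Gamma_three_div_two_lt_one

lemma L_convex {a b w₁ w₂ : ℝ} (ha : 0 < a) (hb : 0 < b) (hw₁ : 0 ≤ w₁) (hw₂ : 0 ≤ w₂)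
    (hw : w₁ + w₂ = 1) : L (w₁ * a + w₂ * b) ≤ w₁ * L a + w₂ * L b := by
  have := Real.convexOn_log_Gamma.2 (mem_Ioi.mpr ha) (mem_Ioi.mpr hb) hw₁ hw₂ hw
  simpa [Function.comp, smul_eq_mul, L] using this

lemma L_add_one {x : ℝ} (hx : 0 < x) : L (x + 1) = Real.log x + L x := by
  rw [L, L, Real.Gamma_add_one hx.ne', Real.log_mul hx.ne' (Real.Gamma_pos_of_pos hx).ne']

lemma L_two : L 2 = 0 := by rw [L, Real.Gamma_two, Real.log_one]

lemma L32_eq : L (3/2) = (1/2) * Real.log Real.pi - Real.log 2 := by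
  have h : Real.Gamma (3/2) = (1/2) * Real.sqrt Real.pi := by
    have := Real.Gamma_add_one (by norm_num : (1/2:ℝ) ≠ 0)
    rw [show (1/2:ℝ)+1 = 3/2 by norm_num, Real.Gamma_one_half_eq] at this
    linarith [this]
  rw [L, h, Real.log_mul (by norm_num) (by positivity),
    Real.log_sqrt Real.pi_pos.le]
  have : Real.log (1/2) = - Real.log 2 := by
    rw [one_div, Real.log_inv]
  rw [this]; ring

/-- A Stirling-type bound: `x log (x+1) - log Γ(x+1) < x + 1/2` at half-integers `x = j/2`. -/
lemma St : ∀ j : ℕ, 1 ≤ j →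
    (j:ℝ)/2 * Real.log ((j:ℝ)/2+1) - L ((j:ℝ)/2+1) < ((j:ℝ)+1)/2 := by
  intro j
  induction j using Nat.strong_induction_on with
  | _ j ih =>
    match j with
    | 0 => intro h; omega
    | 1 =>
      intro _
      norm_num
      rw [L32_eq]
      have h1 : Real.log (3/2) ≤ Real.log Real.pi :=
        Real.log_le_log (by norm_num) (by linarith [Real.pi_gt_three])
      have h2 : Real.log 2 < 1 := by
        have := Real.log_two_lt_d9; linarith
      linarith
    | 2 =>
      intro _
      norm_num [L_two]
      have h2 : Real.log 2 < 1 := by have := Real.log_two_lt_d9; linarith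
      linarith
    | (r+3) =>
      intro _
      have IH := ih (r+1) (by omega) (by omega)
      set x : ℝ := ((r:ℝ)+1)/2 with hxdef
      have hx0 : 0 < x := by positivity
      have hx1 : (0:ℝ) < x + 1 := by linarith
      have harg1 : ((r+3:ℕ):ℝ)/2 + 1 = (x+1) + 1 := by push_cast; ring
      have harg2 : ((r+3:ℕ):ℝ)/2 = x + 1 := by push_cast; ring
      have harg3 : ((r+1:ℕ):ℝ)/2 + 1 = x + 1 := by push_cast; ring
      have harg4 : ((r+1:ℕ):ℝ)/2 = x := by push_cast; ring
      have harg5 : (((r+1:ℕ)):ℝ) + 1 = 2*x + 1 := by push_cast; ring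
      rw [harg3, harg4, harg5] at IH
      rw [harg1, harg2, L_add_one hx1]
      have hlog : Real.log (x+1+1) - Real.log (x+1) ≤ 1/(x+1) := by
        rw [← Real.log_div (by linarith) (by linarith)]
        have h := Real.log_le_sub_one_of_pos (show (0:ℝ) < (x+1+1)/(x+1) by positivity)
        have : (x+1+1)/(x+1) - 1 = 1/(x+1) := by field_simp; ring
        linarith [this ▸ h]
      have hmul : (x+1) * Real.log (x+1+1) ≤ (x+1) * Real.log (x+1) + 1 := by
        have := mul_le_mul_of_nonneg_left hlog hx1.le
        have he : (x+1) * (1/(x+1)) = 1 := by field_simp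
        nlinarith
      have hgoal : ((r+3:ℕ):ℝ) + 1 = 2*x + 3 := by push_cast; ring
      rw [hgoal]
      nlinarith [IH, hmul]

lemma S_pos {j : ℕ} (hj : 1 ≤ j) :
    0 < (j:ℝ) * L ((j:ℝ)/2 + 3/2) - ((j:ℝ)+1) * L ((j:ℝ)/2 + 1) := by
  rcases Nat.lt_or_ge j 2 with hlt | hge
  · interval_cases j
    norm_num
    rw [L_two]
    linarith [L32_neg]
  · set x : ℝ := (j:ℝ)/2 with hx
    have hj2 : (2:ℝ) ≤ (j:ℝ) := by exact_mod_cast hge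
    have hc0 : (0:ℝ) < (j:ℝ) := by linarith
    have hcomb : (1/(j:ℝ)) * (3/2) + (((j:ℝ)-1)/(j:ℝ)) * (x + 3/2) = x + 1 := by
      rw [hx]; field_simp; ring
    have hconv := L_convex (a := 3/2) (b := x + 3/2) (w₁ := 1/(j:ℝ))
      (w₂ := ((j:ℝ)-1)/(j:ℝ)) (by norm_num)
      (by positivity) (by positivity)
      (div_nonneg (by linarith) hc0.le) (by field_simp; ring)
    rw [hcomb] at hconv
    have hLpos : 0 ≤ L (x + 3/2) := L_nonneg (by simp only [hx]; linarith)
    have h1 : (j:ℝ) * L (x+1) ≤ L (3/2) + ((j:ℝ)-1) * L (x+3/2) := by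
      have := mul_le_mul_of_nonneg_left hconv hc0.le
      have e1 : (j:ℝ) * ((1/(j:ℝ)) * L (3/2) + (((j:ℝ)-1)/(j:ℝ)) * L (x+3/2))
          = L (3/2) + ((j:ℝ)-1) * L (x+3/2) := by field_simp; try ring
      linarith [e1 ▸ this]
    nlinarith [L32_neg, hLpos, h1, mul_le_mul_of_nonneg_left h1 (by linarith : (0:ℝ) ≤ (j:ℝ)+1)]

lemma S_lt {j : ℕ} (hj : 1 ≤ j) :
    (j:ℝ) * L ((j:ℝ)/2 + 3/2) - ((j:ℝ)+1) * L ((j:ℝ)/2 + 1) < ((j:ℝ)+1)/2 := by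
  set x : ℝ := (j:ℝ)/2 with hx
  have hx0 : 0 < x := by rw [hx]; positivity
  have hj1 : (1:ℝ) ≤ (j:ℝ) := by exact_mod_cast hj
  have hmid : L (x + 3/2) ≤ L (x+1) + (1/2) * Real.log (x+1) := by
    have hcomb : (1/2:ℝ) * (x+1) + (1/2:ℝ) * (x+2) = x + 3/2 := by ring
    have hconv := L_convex (a := x+1) (b := x+2) (w₁ := 1/2) (w₂ := 1/2)
      (by linarith) (by linarith) (by norm_num) (by norm_num) (by norm_num)
    rw [hcomb] at hconv
    have : L (x+2) = Real.log (x+1) + L (x+1) := by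
      rw [show x+2 = (x+1)+1 by ring, L_add_one (by linarith)]
    linarith [hconv, this]
  have hSt := St j hj
  rw [← hx] at hSt
  have : (j:ℝ) * L (x+3/2) ≤ (j:ℝ) * L (x+1) + x * Real.log (x+1) := by
    have h := mul_le_mul_of_nonneg_left hmid (by linarith : (0:ℝ) ≤ (j:ℝ))
    have e2 : (j:ℝ) * (L (x+1) + 1/2 * Real.log (x+1))
        = (j:ℝ) * L (x+1) + x * Real.log (x+1) := by rw [hx]; ring
    linarith [e2 ▸ h]
  linarith

/-- `ψ j = log Γ(j/2+1) / j`. -/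
noncomputable def ψ (j : ℕ) : ℝ := L ((j:ℝ)/2 + 1) / j

lemma D_bounds {j : ℕ} (hj : 1 ≤ j) :
    0 < ψ (j+1) - ψ j ∧ ψ (j+1) - ψ j < 1/(2*(j:ℝ)) := by
  have hj0 : (0:ℝ) < (j:ℝ) := by exact_mod_cast hj
  have hj1 : (0:ℝ) < (j:ℝ) + 1 := by linarith
  have hD : ψ (j+1) - ψ j =
      ((j:ℝ) * L ((j:ℝ)/2 + 3/2) - ((j:ℝ)+1) * L ((j:ℝ)/2 + 1)) / ((j:ℝ) * ((j:ℝ)+1)) := by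
    rw [ψ, ψ]
    have e1 : ((j+1:ℕ):ℝ)/2 + 1 = (j:ℝ)/2 + 3/2 := by push_cast; ring
    have e2 : ((j+1:ℕ):ℝ) = (j:ℝ) + 1 := by push_cast; ring
    rw [e1, e2]
    field_simp
  constructor
  · rw [hD]
    exact div_pos (S_pos hj) (by positivity)
  · rw [hD, div_lt_div_iff₀ (by positivity) (by positivity)]
    have := S_lt hj
    nlinarith

lemma tele {m : ℕ} (hm : 1 ≤ m) : ∀ n, m + 1 ≤ n →
    0 < ψ n - ψ m ∧ ψ n - ψ m < ((n:ℝ) - m)/(2*(m:ℝ)) := by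
  intro n hn
  induction n, hn using Nat.le_induction with
  | base =>
    have h := D_bounds hm
    refine ⟨h.1, ?_⟩
    have : ((m+1:ℕ):ℝ) - m = 1 := by push_cast; ring
    rw [this]
    exact h.2
  | succ n hn ih =>
    have hm0 : (0:ℝ) < (m:ℝ) := by exact_mod_cast hm
    have hn1 : 1 ≤ n := le_trans hm (by omega)
    have hn0 : (0:ℝ) < (n:ℝ) := by exact_mod_cast hn1
    have hmn2 : (m:ℝ) ≤ (n:ℝ) := by exact_mod_cast (by omega : m ≤ n)
    have hD := D_bounds hn1
    have hIH := ih
    constructor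
    · linarith [hD.1, hIH.1]
    · have h1 : 1/(2*(n:ℝ)) ≤ 1/(2*(m:ℝ)) := by
        apply one_div_le_one_div_of_le (by linarith) (by linarith)
      have e : ((n+1:ℕ):ℝ) - m = ((n:ℝ) - m) + 1 := by push_cast; ring
      rw [e]
      have : (((n:ℝ) - m) + 1)/(2*(m:ℝ)) = ((n:ℝ)-m)/(2*m) + 1/(2*m) := by ring
      rw [this]
      linarith [hD.2, hIH.2]

lemma vol_toReal {p : ℕ} (hp : 1 ≤ p) :
    (volume (ball (0 : E p) 1)).toReal = Real.sqrt Real.pi ^ p / Real.Gamma ((p:ℝ)/2 + 1) := by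
  haveI : Nonempty (Fin p) := ⟨⟨0, hp⟩⟩
  rw [EuclideanSpace.volume_ball]
  simp only [Fintype.card_fin, ENNReal.ofReal_one, one_pow, one_mul]
  rw [ENNReal.toReal_ofReal]
  exact div_nonneg (by positivity) (Real.Gamma_pos_of_pos (by positivity)).le

/-- For 1 ≤ k < n, the constant c_{n,k} lies strictly between e^{-k/2} and 1. -/
theorem cnk_bounds {n k : ℕ} (hk : 1 ≤ k) (hkn : k < n) :
    Real.exp (-(k : ℝ) / 2) < cnk n k ∧ cnk n k < 1 := by
  set m := n - k with hm
  have hm1 : 1 ≤ m := by omega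
  have hmn : m + 1 ≤ n := by omega
  have hn1 : 1 ≤ n := by omega
  have hn0 : (0:ℝ) < n := by exact_mod_cast hn1
  have hm0 : (0:ℝ) < m := by exact_mod_cast hm1
  have hcast : ((m:ℕ):ℝ) = (n:ℝ) - k := by
    rw [hm]; push_cast [Nat.cast_sub hkn.le]; ring
  have hΓn : 0 < Real.Gamma ((n:ℝ)/2 + 1) := Real.Gamma_pos_of_pos (by positivity)
  have hΓm : 0 < Real.Gamma ((m:ℝ)/2 + 1) := Real.Gamma_pos_of_pos (by positivity)
  have hsq : (0:ℝ) < Real.sqrt Real.pi := Real.sqrt_pos.mpr Real.pi_pos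
  have hΓne : 0 < Real.Gamma ((n:ℝ)/2+1) ^ ((m:ℝ)/n) := Real.rpow_pos_of_pos hΓn _
  have hformula : cnk n k
      = Real.Gamma ((m:ℝ)/2+1) / Real.Gamma ((n:ℝ)/2+1) ^ ((m:ℝ)/n) := by
    rw [cnk, vol_toReal hn1, vol_toReal hm1]
    rw [show ((n:ℝ) - k)/n = (m:ℝ)/n by rw [hcast]]
    rw [Real.div_rpow (by positivity) hΓn.le]
    have h1 : (Real.sqrt Real.pi ^ n) ^ ((m:ℝ)/n) = Real.sqrt Real.pi ^ m := by
      rw [← Real.rpow_natCast (Real.sqrt Real.pi) n, ← Real.rpow_mul hsq.le,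
        show (n:ℝ) * ((m:ℝ)/n) = (m:ℝ) by field_simp,
        Real.rpow_natCast]
    rw [h1]
    rw [div_div_div_comm]
    rw [div_self (by positivity : Real.sqrt Real.pi ^ m ≠ 0)]
    rw [one_div_div]
  have hpos : 0 < cnk n k := hformula ▸ div_pos hΓm hΓne
  have hlog : Real.log (cnk n k) = (m:ℝ) * (ψ m - ψ n) := by
    rw [hformula, Real.log_div hΓm.ne' hΓne.ne', Real.log_rpow hΓn, ψ, ψ, L, L]
    field_simp
  have hexp : cnk n k = Real.exp ((m:ℝ) * (ψ m - ψ n)) := by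
    rw [← hlog, Real.exp_log hpos]
  have htele := tele hm1 n hmn
  have hknr : (n:ℝ) - m = (k:ℝ) := by rw [hcast]; ring
  rw [hknr] at htele
  constructor
  · rw [hexp]
    apply Real.exp_lt_exp.mpr
    have h2 : (m:ℝ) * (ψ n - ψ m) < (m:ℝ) * ((k:ℝ)/(2*m)) :=
      mul_lt_mul_of_pos_left htele.2 hm0
    have h3 : (m:ℝ) * ((k:ℝ)/(2*m)) = (k:ℝ)/2 := by field_simp
    nlinarith
  · rw [hexp]
    calc Real.exp ((m:ℝ) * (ψ m - ψ n)) < Real.exp 0 := by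
          apply Real.exp_lt_exp.mpr
          nlinarith [htele.1]
      _ = 1 := Real.exp_zero
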